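/- Strict feasibility implies upper semicontinuity of the optimal solution set in the constraint data: let K be a finite set, fix linear equality constraints E z = 0 on the simplex Δ(K), and consider cost vectors (c₀, c₁, …, c_B) ∈ (ℝ^K)^{B+1} and bounds V ∈ ℝ^B varying continuously with a parameter u in a compact metric space U. Suppose for every u ∈ U there exists z feasible with ⟨c_j(u), z⟩ ≤ V_j − η for all j = 1,…,B and some fixed η > 0, and that each cost map u ↦ c_j(u) is continuous. Then the map u ↦ Γ(u), sending u to the set of minimizers of ⟨c₀(u), ·⟩ over the feasible set {z ∈ Δ(K) : E z = 0, ⟨c_j(u), z⟩ ≤ V_j for all j}, is upper semicontinuous with nonempty compact convex values. -/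

import Mathlib

open Filter Topology

set_option maxHeartbeats 1000000 in
/-- Strict feasibility (strong Slater condition) implies upper
semicontinuity, with nonempty compact convex values, of the optimal-solution
set of a parameterized linear program on the simplex. -/
theorem lp_argmin_usc_of_slater
    (K : Type*) [Fintype K]
    (U : Type*) [MetricSpace U] [CompactSpace U]
    (ιE : Type*) [Fintype ιE] (e : ιE → K → ℝ)
    (B : ℕ)
    (c₀ : U → K → ℝ) (c : Fin B → U → K → ℝ) (V : Fin B → ℝ)
    (hc₀ : Continuous fun u => c₀ u)
    (hc : ∀ j, Continuous fun u => c j u)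
    (η : ℝ) (hη : 0 < η)
    (hslater : ∀ u : U, ∃ z : K → ℝ,
        (∀ k, 0 ≤ z k) ∧ (∑ k, z k = 1) ∧ (∀ j, ∑ k, e j k * z k = 0) ∧
        ∀ j : Fin B, ∑ k, c j u k * z k ≤ V j - η)
    (Feas : U → Set (K → ℝ))
    (hFeas : ∀ u, Feas u = {z : K → ℝ | (∀ k, 0 ≤ z k) ∧ (∑ k, z k = 1) ∧
        (∀ j, ∑ k, e j k * z k = 0) ∧ ∀ j : Fin B, ∑ k, c j u k * z k ≤ V j})
    (Γ : U → Set (K → ℝ))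
    (hΓ : ∀ u, Γ u = {z ∈ Feas u |
        ∀ w ∈ Feas u, ∑ k, c₀ u k * z k ≤ ∑ k, c₀ u k * w k}) :
    (∀ u, (Γ u).Nonempty ∧ IsCompact (Γ u) ∧ Convex ℝ (Γ u)) ∧
    (∀ u : U, ∀ O : Set (K → ℝ), IsOpen O → Γ u ⊆ O →
        ∀ᶠ u' in nhds u, Γ u' ⊆ O) := by
  classical
  have gcont : ∀ a : K → ℝ, Continuous fun z : K → ℝ => ∑ k, a k * z k := fun a =>
    continuous_finset_sum _ fun k _ => continuous_const.mul (continuous_apply k)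
  have gcont2 : Continuous fun p : (K → ℝ) × (K → ℝ) => ∑ k, p.1 k * p.2 k :=
    continuous_finset_sum _ fun k _ =>
      ((continuous_apply k).comp continuous_fst).mul ((continuous_apply k).comp continuous_snd)
  have sum_comb : ∀ (f z1 z2 : K → ℝ) (a b : ℝ),
      ∑ k, f k * (a • z1 + b • z2) k = a * ∑ k, f k * z1 k + b * ∑ k, f k * z2 k := by
    intro f z1 z2 a b
    rw [Finset.mul_sum, Finset.mul_sum, ← Finset.sum_add_distrib]
    refine Finset.sum_congr rfl fun k _ => ?_
    simp only [Pi.add_apply, Pi.smul_apply, smul_eq_mul]; ring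
  have sum_comb' : ∀ (z1 z2 : K → ℝ) (a b : ℝ),
      ∑ k, (a • z1 + b • z2) k = a * ∑ k, z1 k + b * ∑ k, z2 k := by
    intro z1 z2 a b
    simpa using sum_comb (fun _ => 1) z1 z2 a b
  -- properties of the feasible set
  have hFeasSub : ∀ u, Feas u ⊆ stdSimplex ℝ K := by
    intro u z hz; rw [hFeas] at hz; exact ⟨hz.1, hz.2.1⟩
  have hFeasClosed : ∀ u, IsClosed (Feas u) := by
    intro u
    have heq : Feas u = (stdSimplex ℝ K) ∩ ((⋂ j, {z : K → ℝ | ∑ k, e j k * z k = 0}) ∩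
        ⋂ j, {z : K → ℝ | ∑ k, c j u k * z k ≤ V j}) := by
      rw [hFeas]; ext z
      simp only [Set.mem_setOf_eq, Set.mem_inter_iff, Set.mem_iInter, stdSimplex,
        Set.mem_setOf_eq]
      tauto
    rw [heq]
    exact (isClosed_stdSimplex ℝ K).inter
      ((isClosed_iInter fun j => isClosed_eq (gcont _) continuous_const).inter
        (isClosed_iInter fun j => isClosed_le (gcont _) continuous_const))
  have hFeasCompact : ∀ u, IsCompact (Feas u) := fun u =>
    (isCompact_stdSimplex ℝ K).of_isClosed_subset (hFeasClosed u) (hFeasSub u)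
  have hFeasNe : ∀ u, (Feas u).Nonempty := by
    intro u
    obtain ⟨z, h1, h2, h3, h4⟩ := hslater u
    exact ⟨z, by rw [hFeas]; exact ⟨h1, h2, h3, fun j => (h4 j).trans (by linarith)⟩⟩
  have hFeasConvex : ∀ u, Convex ℝ (Feas u) := by
    intro u
    rw [hFeas]
    intro z1 h1 z2 h2 a b ha hb hab
    refine ⟨fun k => ?_, ?_, fun j => ?_, fun j => ?_⟩
    · have := add_nonneg (mul_nonneg ha (h1.1 k)) (mul_nonneg hb (h2.1 k))
      simpa using this
    · rw [sum_comb', h1.2.1, h2.2.1]; ring_nf; linarith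
    · rw [sum_comb, h1.2.2.1 j, h2.2.2.1 j]; ring
    · rw [sum_comb]
      calc a * ∑ k, c j u k * z1 k + b * ∑ k, c j u k * z2 k
          ≤ a * V j + b * V j :=
            add_le_add (mul_le_mul_of_nonneg_left (h1.2.2.2 j) ha)
              (mul_le_mul_of_nonneg_left (h2.2.2.2 j) hb)
        _ = V j := by rw [← add_mul, hab, one_mul]
  -- membership in Γ unfolded
  have hΓmem : ∀ u z, z ∈ Γ u ↔ z ∈ Feas u ∧
      ∀ w ∈ Feas u, ∑ k, c₀ u k * z k ≤ ∑ k, c₀ u k * w k := by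
    intro u z; rw [hΓ]; exact Iff.rfl
  -- values: nonempty compact convex
  have hvals : ∀ u, (Γ u).Nonempty ∧ IsCompact (Γ u) ∧ Convex ℝ (Γ u) := by
    intro u
    refine ⟨?_, ?_, ?_⟩
    · obtain ⟨z, hz, hzmin⟩ := (hFeasCompact u).exists_isMinOn (hFeasNe u)
        ((gcont (c₀ u)).continuousOn)
      exact ⟨z, (hΓmem u z).2 ⟨hz, fun w hw => hzmin hw⟩⟩
    · have heq : Γ u = Feas u ∩ ⋂ w ∈ Feas u,
          {z : K → ℝ | ∑ k, c₀ u k * z k ≤ ∑ k, c₀ u k * w k} := by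
        ext z
        simp only [hΓmem, Set.mem_inter_iff, Set.mem_iInter, Set.mem_setOf_eq]
      rw [heq]
      exact (hFeasCompact u).inter_right
        (isClosed_biInter fun w _ => isClosed_le (gcont _) continuous_const)
    · intro z1 h1 z2 h2 a b ha hb hab
      rw [hΓmem] at h1 h2 ⊢
      refine ⟨hFeasConvex u h1.1 h2.1 ha hb hab, fun w hw => ?_⟩
      rw [sum_comb]
      calc a * ∑ k, c₀ u k * z1 k + b * ∑ k, c₀ u k * z2 k
          ≤ a * ∑ k, c₀ u k * w k + b * ∑ k, c₀ u k * w k :=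
            add_le_add (mul_le_mul_of_nonneg_left (h1.2 w hw) ha)
              (mul_le_mul_of_nonneg_left (h2.2 w hw) hb)
        _ = _ := by rw [← add_mul, hab, one_mul]
  refine ⟨hvals, ?_⟩
  -- upper semicontinuity
  intro u O hO hΓO
  by_contra hcon
  rw [Filter.not_eventually] at hcon
  obtain ⟨un, hun, hun'⟩ := Filter.exists_seq_forall_of_frequently hcon
  have hz : ∀ n, ∃ z, z ∈ Γ (un n) ∧ z ∉ O := fun n => Set.not_subset.1 (hun' n)
  choose zn hzn hznO using hz
  have hznS : ∀ n, zn n ∈ stdSimplex ℝ K := fun n =>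
    hFeasSub (un n) ((hΓmem (un n) (zn n)).1 (hzn n)).1
  obtain ⟨zlim, hzlimS, φ, hφ, hwn⟩ := (isCompact_stdSimplex ℝ K).tendsto_subseq hznS
  set vn : ℕ → U := un ∘ φ with hvndef
  have hvn : Tendsto vn atTop (nhds u) := hun.comp hφ.tendsto_atTop
  set wn : ℕ → (K → ℝ) := zn ∘ φ with hwndef
  have hwnΓ : ∀ n, wn n ∈ Γ (vn n) := fun n => hzn (φ n)
  have hwnO : ∀ n, wn n ∉ O := fun n => hznO (φ n)
  -- convergence of the pairings
  have hpair : ∀ (d : U → K → ℝ), Continuous (fun u => d u) →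
      Tendsto (fun n => ∑ k, d (vn n) k * wn n k) atTop (nhds (∑ k, d u k * zlim k)) := by
    intro d hd
    have h1 : Tendsto (fun n => (d (vn n), wn n)) atTop (nhds (d u, zlim)) :=
      ((hd.tendsto u).comp hvn).prodMk_nhds hwn
    exact (gcont2.tendsto (d u, zlim)).comp h1
  -- the limit point is feasible at u
  have hzlimFeas : zlim ∈ Feas u := by
    rw [hFeas]
    refine ⟨hzlimS.1, hzlimS.2, fun j => ?_, fun j => ?_⟩
    · have h1 : Tendsto (fun n => ∑ k, e j k * wn n k) atTop
          (nhds (∑ k, e j k * zlim k)) := ((gcont (e j)).tendsto zlim).comp hwn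
      have h2 : ∀ n, ∑ k, e j k * wn n k = 0 := fun n => by
        have := ((hΓmem _ _).1 (hwnΓ n)).1
        rw [hFeas] at this; exact this.2.2.1 j
      have h3 : Tendsto (fun n => ∑ k, e j k * wn n k) atTop (nhds 0) := by
        have heq : (fun n => ∑ k, e j k * wn n k) = fun _ => (0:ℝ) := funext h2
        rw [heq]; exact tendsto_const_nhds
      exact tendsto_nhds_unique h1 h3
    · refine le_of_tendsto (hpair (c j) (hc j)) (Filter.Eventually.of_forall fun n => ?_)
      have := ((hΓmem _ _).1 (hwnΓ n)).1
      rw [hFeas] at this; exact this.2.2.2 j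
  -- the limit point is optimal at u
  have hzlimopt : ∀ w ∈ Feas u, ∑ k, c₀ u k * zlim k ≤ ∑ k, c₀ u k * w k := by
    intro w hw
    obtain ⟨s, hs1, hs2, hs3, hs4⟩ := hslater u
    rw [hFeas] at hw
    -- for every t ∈ (0,1], the perturbed point is eventually feasible, giving a bound
    have key : ∀ t ∈ Set.Ioc (0:ℝ) 1,
        ∑ k, c₀ u k * zlim k ≤ (1 - t) * (∑ k, c₀ u k * w k) + t * (∑ k, c₀ u k * s k) := by
      intro t ht
      set wt : K → ℝ := (1 - t) • w + t • s with hwtdef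
      have hwtS : ∀ k, 0 ≤ wt k := fun k => by
        have := add_nonneg (mul_nonneg (by linarith [ht.2] : (0:ℝ) ≤ 1 - t) (hw.1 k))
          (mul_nonneg ht.1.le (hs1 k))
        simpa [wt] using this
      have hwtsum : ∑ k, wt k = 1 := by
        rw [hwtdef, sum_comb', hw.2.1, hs2]; ring
      have hwte : ∀ j, ∑ k, e j k * wt k = 0 := fun j => by
        rw [hwtdef, sum_comb, hw.2.2.1 j, hs3 j]; ring
      have hwtc : ∀ j : Fin B, ∑ k, c j u k * wt k ≤ V j - t * η := fun j => by
        rw [hwtdef, sum_comb]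
        calc (1 - t) * ∑ k, c j u k * w k + t * ∑ k, c j u k * s k
            ≤ (1 - t) * V j + t * (V j - η) :=
              add_le_add (mul_le_mul_of_nonneg_left (hw.2.2.2 j) (by linarith [ht.2]))
                (mul_le_mul_of_nonneg_left (hs4 j) ht.1.le)
          _ = V j - t * η := by ring
      -- eventually wt ∈ Feas (vn n)
      have hev : ∀ᶠ n in atTop, wt ∈ Feas (vn n) := by
        have hevj : ∀ j : Fin B, ∀ᶠ n in atTop, ∑ k, c j (vn n) k * wt k ≤ V j := by
          intro j
          have hlim : Tendsto (fun n => ∑ k, c j (vn n) k * wt k) atTop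
              (nhds (∑ k, c j u k * wt k)) := by
            have h1 : Tendsto (fun n => (c j (vn n), wt)) atTop (nhds (c j u, wt)) :=
              (((hc j).tendsto u).comp hvn).prodMk_nhds tendsto_const_nhds
            exact (gcont2.tendsto (c j u, wt)).comp h1
          have hlt : ∑ k, c j u k * wt k < V j := by
            have := hwtc j
            nlinarith [ht.1]
          exact hlim.eventually (tendsto_id.eventually_lt_const hlt) |>.mono
            fun n hn => hn.le
        have := (eventually_all (ι := Fin B)).2 hevj
        filter_upwards [this] with n hn
        rw [hFeas]
        exact ⟨hwtS, hwtsum, hwte, hn⟩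
      -- limit of optimality inequalities
      have hineq : ∀ᶠ n in atTop,
          ∑ k, c₀ (vn n) k * wn n k ≤ ∑ k, c₀ (vn n) k * wt k := by
        filter_upwards [hev] with n hn
        exact ((hΓmem _ _).1 (hwnΓ n)).2 wt hn
      have hlimL : Tendsto (fun n => ∑ k, c₀ (vn n) k * wn n k) atTop
          (nhds (∑ k, c₀ u k * zlim k)) := hpair c₀ hc₀
      have hlimR : Tendsto (fun n => ∑ k, c₀ (vn n) k * wt k) atTop
          (nhds (∑ k, c₀ u k * wt k)) := by
        have h1 : Tendsto (fun n => (c₀ (vn n), wt)) atTop (nhds (c₀ u, wt)) :=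
          ((hc₀.tendsto u).comp hvn).prodMk_nhds tendsto_const_nhds
        exact (gcont2.tendsto (c₀ u, wt)).comp h1
      have hle := le_of_tendsto_of_tendsto hlimL hlimR hineq
      calc ∑ k, c₀ u k * zlim k ≤ ∑ k, c₀ u k * wt k := hle
        _ = _ := by rw [hwtdef, sum_comb]
    -- take t → 0⁺
    have hlim0 : Tendsto (fun t : ℝ => (1 - t) * (∑ k, c₀ u k * w k)
        + t * (∑ k, c₀ u k * s k)) (nhdsWithin 0 (Set.Ioi 0)) (nhds (∑ k, c₀ u k * w k)) := by
      have : Continuous fun t : ℝ => (1 - t) * (∑ k, c₀ u k * w k)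
          + t * (∑ k, c₀ u k * s k) :=
        ((continuous_const.sub continuous_id).mul continuous_const).add
          (continuous_id.mul continuous_const)
      have h0 := this.tendsto 0
      simpa using h0.mono_left nhdsWithin_le_nhds
    refine ge_of_tendsto hlim0 ?_
    filter_upwards [Ioc_mem_nhdsGT_of_mem (by norm_num : (0:ℝ) ∈ Set.Ico (0:ℝ) 1)] with t ht
    exact key t ht
  -- contradiction: zlim ∈ Γ u ⊆ O but wn n ∉ O and wn → zlim
  have hzlimΓ : zlim ∈ Γ u := (hΓmem u zlim).2 ⟨hzlimFeas, hzlimopt⟩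
  have : ∀ᶠ n in atTop, wn n ∈ O := hwn.eventually (hO.mem_nhds (hΓO hzlimΓ))
  obtain ⟨n, hn⟩ := this.exists
  exact hwnO n hn
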